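/- In the algorithmic setting described in the context, ∑_{k=0}^∞ ‖X^{k+1} − X^k‖_F² < +∞; consequently ‖X^{k+1} − X^k‖_F → 0 as k → ∞, and moreover ‖Y^k − X^k‖_F → 0 and ‖Y^k − X^{k+1}‖_F → 0 as k → ∞. -/

import Mathlib

open Filter Topology Matrix

/-- The singular values of a real `m × n` matrix (`m ≤ n`), in nonincreasing order:
`sval X i` is the `(i+1)`-th largest singular value of `X`. -/
noncomputable def sval {m n : ℕ} (X : Matrix (Fin m) (Fin n) ℝ) : Fin m → ℝ :=
  fun i =>
    let ev : Fin m → ℝ := (Matrix.isHermitian_mul_conjTranspose_self X).eigenvalues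
    Real.sqrt (ev (Tuple.sort ev i.rev))

/-- The `m × n` matrix with the vector `d` on its main diagonal and zeros elsewhere. -/
def rdiag {m n : ℕ} (d : Fin m → ℝ) : Matrix (Fin m) (Fin n) ℝ :=
  Matrix.of fun i j => if (j : ℕ) = (i : ℕ) then d i else 0

/-- The Frobenius norm of a matrix. -/
noncomputable def frobNorm {m n : ℕ} (X : Matrix (Fin m) (Fin n) ℝ) : ℝ :=
  Real.sqrt (∑ i, ∑ j, (X i j) ^ 2)

/-- The Frobenius (trace) inner product of two matrices. -/
def finner {m n : ℕ} (A B : Matrix (Fin m) (Fin n) ℝ) : ℝ :=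
  ∑ i, ∑ j, A i j * B i j

/-- `G` is the (Fréchet) gradient of `f : ℝ^{m×n} → ℝ` at `X`, with respect to the
Frobenius inner product. -/
def HasFrobGradientAt {m n : ℕ} (f : Matrix (Fin m) (Fin n) ℝ → ℝ)
    (G X : Matrix (Fin m) (Fin n) ℝ) : Prop :=
  Filter.Tendsto
    (fun H : Matrix (Fin m) (Fin n) ℝ => |f (X + H) - f X - finner G H| / frobNorm H)
    (nhdsWithin 0 {0}ᶜ) (nhds 0)


namespace FrobAux

variable {m n : ℕ}

noncomputable def toE (A : Matrix (Fin m) (Fin n) ℝ) : EuclideanSpace ℝ (Fin m × Fin n) :=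
  (WithLp.equiv 2 _).symm fun p => A p.1 p.2

lemma toE_apply (A : Matrix (Fin m) (Fin n) ℝ) (q : Fin m × Fin n) : toE A q = A q.1 q.2 := rfl

lemma toE_add (A B : Matrix (Fin m) (Fin n) ℝ) : toE (A + B) = toE A + toE B := rfl
lemma toE_sub (A B : Matrix (Fin m) (Fin n) ℝ) : toE (A - B) = toE A - toE B := rfl
lemma toE_smul (c : ℝ) (A : Matrix (Fin m) (Fin n) ℝ) : toE (c • A) = c • toE A := rfl
lemma toE_zero : toE (0 : Matrix (Fin m) (Fin n) ℝ) = 0 := rfl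

lemma frob_eq (A : Matrix (Fin m) (Fin n) ℝ) : frobNorm A = ‖toE A‖ := by
  rw [EuclideanSpace.norm_eq]
  unfold frobNorm
  congr 1
  rw [Fintype.sum_prod_type]
  simp [toE_apply, Real.norm_eq_abs, sq_abs]

lemma finner_eq (A B : Matrix (Fin m) (Fin n) ℝ) :
    finner A B = inner ℝ (toE A) (toE B) := by
  rw [PiLp.inner_apply]
  unfold finner
  rw [Fintype.sum_prod_type]
  simp [toE_apply, RCLike.inner_apply, mul_comm]

lemma frob_nonneg (A : Matrix (Fin m) (Fin n) ℝ) : 0 ≤ frobNorm A := Real.sqrt_nonneg _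

lemma frob_zero : frobNorm (0 : Matrix (Fin m) (Fin n) ℝ) = 0 := by
  rw [frob_eq, toE_zero, norm_zero]

lemma frob_triangle (A B : Matrix (Fin m) (Fin n) ℝ) :
    frobNorm (A + B) ≤ frobNorm A + frobNorm B := by
  rw [frob_eq, frob_eq, frob_eq, toE_add]; exact norm_add_le _ _

lemma frob_neg (A : Matrix (Fin m) (Fin n) ℝ) : frobNorm (-A) = frobNorm A := by
  have : -A = (0 : Matrix (Fin m) (Fin n) ℝ) - A := (zero_sub A).symm
  rw [this, frob_eq, toE_sub, toE_zero, zero_sub, norm_neg, ← frob_eq]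

lemma frob_smul (c : ℝ) (A : Matrix (Fin m) (Fin n) ℝ) :
    frobNorm (c • A) = |c| * frobNorm A := by
  rw [frob_eq, toE_smul, norm_smul, Real.norm_eq_abs, ← frob_eq]

lemma frob_pos {A : Matrix (Fin m) (Fin n) ℝ} (hA : A ≠ 0) : 0 < frobNorm A := by
  rcases (frob_nonneg A).lt_or_eq with h | h
  · exact h
  · exfalso; apply hA
    have : toE A = 0 := by
      have : ‖toE A‖ = 0 := by rw [← frob_eq, ← h]
      exact norm_eq_zero.mp this
    funext i j
    have := congrArg (fun v => v (i, j)) this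
    simpa [toE_apply] using this

lemma finner_le (A B : Matrix (Fin m) (Fin n) ℝ) :
    finner A B ≤ frobNorm A * frobNorm B := by
  rw [finner_eq, frob_eq, frob_eq]; exact real_inner_le_norm _ _

lemma finner_comm (A B : Matrix (Fin m) (Fin n) ℝ) : finner A B = finner B A := by
  unfold finner; congr 1; funext i; congr 1; funext j; ring

lemma finner_sub_left (A B C : Matrix (Fin m) (Fin n) ℝ) :
    finner (A - B) C = finner A C - finner B C := by
  rw [finner_eq, finner_eq, finner_eq, toE_sub, inner_sub_left]

lemma finner_sub_right (A B C : Matrix (Fin m) (Fin n) ℝ) :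
    finner A (B - C) = finner A B - finner A C := by
  rw [finner_eq, finner_eq, finner_eq, toE_sub, inner_sub_right]

lemma finner_smul_right (c : ℝ) (A B : Matrix (Fin m) (Fin n) ℝ) :
    finner A (c • B) = c * finner A B := by
  rw [finner_eq, finner_eq, toE_smul, real_inner_smul_right]

lemma finner_zero_right (A : Matrix (Fin m) (Fin n) ℝ) : finner A 0 = 0 := by
  rw [finner_eq, toE_zero, inner_zero_right]

lemma neg_finner_le (A B : Matrix (Fin m) (Fin n) ℝ) :
    -(frobNorm A * frobNorm B) ≤ finner A B := by
  have h := finner_le (-A) B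
  rw [frob_neg] at h
  have : finner (-A) B = -finner A B := by
    have : (-A) = (0 : Matrix (Fin m) (Fin n) ℝ) - A := (zero_sub A).symm
    rw [this, finner_sub_left]
    simp [finner]
  linarith

/-- tangent line inequality for concave `t^p`. -/
lemma rpow_tangent {p s t : ℝ} (hp0 : 0 < p) (hp1 : p < 1) (hs : 0 ≤ s) (ht : 0 < t) :
    s ^ p ≤ t ^ p + p * t ^ (p - 1) * (s - t) := by
  have h := Real.geom_mean_le_arith_mean2_weighted hp0.le (by linarith : (0:ℝ) ≤ 1 - p)
    (div_nonneg hs ht.le) zero_le_one (by ring)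
  rw [Real.one_rpow, mul_one] at h
  -- h : (s/t)^p ≤ p * (s/t) + (1-p) * 1
  have hsp : s ^ p = t ^ p * (s / t) ^ p := by
    rw [← Real.mul_rpow ht.le (div_nonneg hs ht.le), mul_div_cancel₀ _ ht.ne']
  have htp : 0 < t ^ p := Real.rpow_pos_of_pos ht p
  have hps : t ^ (p - 1) = t ^ p / t := by
    rw [Real.rpow_sub ht, Real.rpow_one]
  rw [hsp, hps]
  have h2 : t ^ p * (s / t) ^ p ≤ t ^ p * (p * (s / t) + (1 - p) * 1) :=
    mul_le_mul_of_nonneg_left h htp.le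
  calc t ^ p * (s / t) ^ p ≤ t ^ p * (p * (s / t) + (1 - p) * 1) := h2
    _ = t ^ p + p * (t ^ p / t) * (s - t) := by field_simp; ring




lemma hasDerivAt_line {f : Matrix (Fin m) (Fin n) ℝ → ℝ}
    {Gf : Matrix (Fin m) (Fin n) ℝ → Matrix (Fin m) (Fin n) ℝ}
    (hgrad : ∀ Z, HasFrobGradientAt f (Gf Z) Z)
    (B D : Matrix (Fin m) (Fin n) ℝ) (t : ℝ) :
    HasDerivAt (fun s : ℝ => f (B + s • D)) (finner (Gf (B + t • D)) D) t := by
  by_cases hD : D = 0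
  · subst hD
    simp only [smul_zero, add_zero]
    rw [finner_zero_right]
    exact hasDerivAt_const t _
  · have hDpos : 0 < frobNorm D := frob_pos hD
    rw [hasDerivAt_iff_tendsto]
    set Z := B + t • D with hZ
    have hq := hgrad Z
    set q : Matrix (Fin m) (Fin n) ℝ → ℝ :=
      fun H => |f (Z + H) - f Z - finner (Gf Z) H| / frobNorm H with hqdef
    have hmap : Tendsto (fun s : ℝ => (s - t) • D) (𝓝[≠] t) (𝓝[{0}ᶜ] 0) := by
      rw [tendsto_nhdsWithin_iff]
      constructor
      · have hc : Continuous fun s : ℝ => (s - t) • D := by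
          apply continuous_matrix
          intro i j
          simp only [Matrix.smul_apply, smul_eq_mul]
          exact (continuous_id.sub continuous_const).mul continuous_const
        have h2 := (hc.tendsto t).mono_left (nhdsWithin_le_nhds (s := {t}ᶜ))
        simpa using h2
      · filter_upwards [self_mem_nhdsWithin] with s hs
        simp only [Set.mem_compl_iff, Set.mem_singleton_iff] at hs ⊢
        intro hcontra
        apply hD
        funext i j
        have h3 := congrFun (congrFun hcontra i) j
        simp only [Matrix.smul_apply, smul_eq_mul, Matrix.zero_apply] at h3
        exact (mul_eq_zero.mp h3).resolve_left (sub_ne_zero.mpr hs)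
    have hcomp : Tendsto (fun s : ℝ => frobNorm D * q ((s - t) • D)) (𝓝[≠] t) (𝓝 0) := by
      have h4 := (hq.comp hmap).const_mul (frobNorm D)
      simpa using h4
    have hfull : Tendsto (fun s : ℝ => frobNorm D * q ((s - t) • D)) (𝓝 t) (𝓝 0) := by
      rw [← nhdsNE_sup_pure t, Filter.tendsto_sup]
      refine ⟨hcomp, ?_⟩
      have hval : frobNorm D * q ((t - t) • D) = 0 := by
        simp [hqdef, sub_self, zero_smul, finner_zero_right]
      have h5 := tendsto_pure_nhds (fun s : ℝ => frobNorm D * q ((s - t) • D)) t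
      rwa [hval] at h5
    refine hfull.congr fun s => ?_
    have hBs : B + s • D = Z + (s - t) • D := by
      rw [hZ, sub_smul]; abel
    have hfin : finner (Gf Z) ((s - t) • D) = (s - t) * finner (Gf Z) D :=
      finner_smul_right _ _ _
    simp only [hqdef, hBs, hfin, Real.norm_eq_abs, smul_eq_mul, frob_smul]
    by_cases hst : s = t
    · subst hst; simp
    · have h1 : |s - t| ≠ 0 := by simpa [sub_eq_zero] using hst
      field_simp

lemma descent_upper {Lf : ℝ} {f : Matrix (Fin m) (Fin n) ℝ → ℝ}
    {Gf : Matrix (Fin m) (Fin n) ℝ → Matrix (Fin m) (Fin n) ℝ}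
    (hgrad : ∀ Z, HasFrobGradientAt f (Gf Z) Z)
    (hlip : ∀ Z W, frobNorm (Gf Z - Gf W) ≤ Lf * frobNorm (Z - W))
    (A B : Matrix (Fin m) (Fin n) ℝ) :
    f A ≤ f B + finner (Gf B) (A - B) + Lf / 2 * frobNorm (A - B) ^ 2 := by
  set D := A - B with hDdef
  set c1 := finner (Gf B) D with hc1def
  set c2 := Lf / 2 * frobNorm D ^ 2 with hc2def
  set φ : ℝ → ℝ := fun t => f (B + t • D) - t * c1 - t ^ 2 * c2 with hφ
  have hφ' : ∀ t : ℝ, HasDerivAt φ (finner (Gf (B + t • D)) D - c1 - 2 * t * c2) t := by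
    intro t
    have h1 := hasDerivAt_line hgrad B D t
    have h2 : HasDerivAt (fun s : ℝ => s * c1) c1 t := by
      simpa using (hasDerivAt_id t).mul_const c1
    have h3 : HasDerivAt (fun s : ℝ => s ^ 2 * c2) (2 * t * c2) t := by
      have h4 := (hasDerivAt_pow 2 t).mul_const c2
      simpa [mul_comm, mul_assoc] using h4
    exact (h1.sub h2).sub h3
  have hderiv : ∀ t ∈ Set.Ioo (0:ℝ) 1, deriv φ t ≤ 0 := by
    intro t ht
    rw [(hφ' t).deriv]
    have hlipt := hlip (B + t • D) B
    have hsimp : B + t • D - B = t • D := by abel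
    rw [hsimp, frob_smul, abs_of_pos ht.1] at hlipt
    have hCS : finner (Gf (B + t • D) - Gf B) D
        ≤ frobNorm (Gf (B + t • D) - Gf B) * frobNorm D := finner_le _ _
    have hsub : finner (Gf (B + t • D)) D - c1 = finner (Gf (B + t • D) - Gf B) D := by
      rw [finner_sub_left, hc1def]
    have hfD : 0 ≤ frobNorm D := frob_nonneg D
    have h5 : finner (Gf (B + t • D) - Gf B) D ≤ Lf * (t * frobNorm D) * frobNorm D :=
      le_trans hCS (mul_le_mul_of_nonneg_right hlipt hfD)
    have hc2 : 2 * t * c2 = Lf * (t * frobNorm D) * frobNorm D := by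
      rw [hc2def]; ring
    linarith
  have hmono : AntitoneOn φ (Set.Icc (0:ℝ) 1) := by
    apply antitoneOn_of_deriv_nonpos (convex_Icc 0 1)
    · exact (Differentiable.continuous fun t => (hφ' t).differentiableAt).continuousOn
    · exact fun x _ => ((hφ' x).differentiableAt).differentiableWithinAt
    · intro x hx
      rw [interior_Icc] at hx
      exact hderiv x hx
  have h01 := hmono (Set.left_mem_Icc.mpr zero_le_one) (Set.right_mem_Icc.mpr zero_le_one)
    zero_le_one
  have hφ0 : φ 0 = f B := by simp [hφ]
  have hφ1 : φ 1 = f A - c1 - c2 := by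
    have hA : B + D = A := by rw [hDdef]; abel
    simp [hφ, hA]
  rw [hφ0, hφ1] at h01
  linarith

lemma descent_lower {Lf : ℝ} {f : Matrix (Fin m) (Fin n) ℝ → ℝ}
    {Gf : Matrix (Fin m) (Fin n) ℝ → Matrix (Fin m) (Fin n) ℝ}
    (hgrad : ∀ Z, HasFrobGradientAt f (Gf Z) Z)
    (hlip : ∀ Z W, frobNorm (Gf Z - Gf W) ≤ Lf * frobNorm (Z - W))
    (A B : Matrix (Fin m) (Fin n) ℝ) :
    f B + finner (Gf B) (A - B) - 3 * Lf / 2 * frobNorm (A - B) ^ 2 ≤ f A := by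
  have h1 := descent_upper hgrad hlip B A
  have hn : frobNorm (B - A) = frobNorm (A - B) := by
    rw [show B - A = -(A - B) by abel, frob_neg]
  have h2 : finner (Gf A) (B - A) = -finner (Gf A) (A - B) := by
    rw [show B - A = (0 : Matrix (Fin m) (Fin n) ℝ) - (A - B) by abel, finner_sub_right,
      finner_zero_right]
    ring
  have h3 : finner (Gf A) (A - B) = finner (Gf B) (A - B) + finner (Gf A - Gf B) (A - B) := by
    rw [finner_sub_left]; ring
  have h4 : -(frobNorm (Gf A - Gf B) * frobNorm (A - B)) ≤ finner (Gf A - Gf B) (A - B) :=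
    neg_finner_le _ _
  have h6 : frobNorm (Gf A - Gf B) * frobNorm (A - B)
      ≤ Lf * frobNorm (A - B) * frobNorm (A - B) :=
    mul_le_mul_of_nonneg_right (hlip A B) (frob_nonneg _)
  have hsq : frobNorm (A - B) * frobNorm (A - B) = frobNorm (A - B) ^ 2 := by ring
  rw [hn, h2] at h1
  nlinarith [h1, h3, h4, h6, hsq]


lemma key_arith {Lf β ab a1 a0 ay g1 g2 g3 u vv dk w0 S' S T' T : ℝ}
    (hA : ay + g1 + β / 2 * u + β / 2 * dk + S' ≤ ay + g2 + β / 2 * vv + β / 2 * 0 ^ 2 + S)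
    (hB : a1 ≤ ay + (g1 - g3) + Lf / 2 * u)
    (hC : ay + (g2 - g3) - 3 * Lf / 2 * vv ≤ a0)
    (hconc : T' ≤ T + (S' - S))
    (hv2 : (3 * Lf + β) / 2 * vv ≤ (3 * Lf + β) / 2 * (ab ^ 2 * w0))
    (huβ : Lf / 2 * u ≤ β / 2 * u) :
    a1 + T' + (3 * Lf + β) / 2 * ab ^ 2 * dk + (β / 2 - (3 * Lf + β) / 2 * ab ^ 2) * dk
      ≤ a0 + T + (3 * Lf + β) / 2 * ab ^ 2 * w0 := by
  nlinarith [hA, hB, hC, hconc, hv2, huβ]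

end FrobAux

/-- Square-summability of successive gaps: along the iterates of the
extrapolated iteratively reweighted nuclear norm algorithm,
`∑ₖ ‖X^{k+1} − X^k‖_F² < ∞`, hence `‖X^{k+1} − X^k‖_F → 0`, `‖Y^k − X^k‖_F → 0` and
`‖Y^k − X^{k+1}‖_F → 0`. (Here `X^{−1} = X^0`, realized by truncated subtraction.) -/
theorem stmt_3 {m n : ℕ} (hmn : m ≤ n) (p lam Lf β alphabar : ℝ)
    (hp0 : 0 < p) (hp1 : p < 1) (hlam : 0 < lam)
    (hLf : 0 ≤ Lf) (hβ : Lf < β)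
    (hab0 : 0 < alphabar) (hab1 : alphabar < Real.sqrt (β / (3 * Lf + β)))
    (f : Matrix (Fin m) (Fin n) ℝ → ℝ)
    (Gf : Matrix (Fin m) (Fin n) ℝ → Matrix (Fin m) (Fin n) ℝ)
    (hgrad : ∀ Z, HasFrobGradientAt f (Gf Z) Z)
    (hlip : ∀ Z W, frobNorm (Gf Z - Gf W) ≤ Lf * frobNorm (Z - W))
    (hlevel : ∀ cc : ℝ, ∃ R : ℝ, ∀ Z : Matrix (Fin m) (Fin n) ℝ,
      f Z + lam * (∑ i, sval Z i ^ p) ≤ cc → frobNorm Z ≤ R)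
    (X Y : ℕ → Matrix (Fin m) (Fin n) ℝ) (ε : ℕ → Fin m → ℝ)
    (hε : ∀ k i, 0 < ε k i) (hεmono : ∀ k i, ε (k + 1) i ≤ ε k i)
    (α : ℕ → ℝ) (hα : ∀ k, α k ∈ Set.Icc 0 alphabar)
    (hY : ∀ k, Y k = X k + α k • (X k - X (k - 1)))
    (hmin : ∀ k, ∀ Z : Matrix (Fin m) (Fin n) ℝ,
      f (Y k) + finner (X (k + 1)) (Gf (Y k))
          + β / 2 * frobNorm (X (k + 1) - Y k) ^ 2
          + β / 2 * frobNorm (X (k + 1) - X k) ^ 2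
          + lam * ∑ i, (p * (sval (X k) i + ε k i) ^ (p - 1)) * sval (X (k + 1)) i
        ≤ f (Y k) + finner Z (Gf (Y k))
          + β / 2 * frobNorm (Z - Y k) ^ 2
          + β / 2 * frobNorm (Z - X k) ^ 2
          + lam * ∑ i, (p * (sval (X k) i + ε k i) ^ (p - 1)) * sval Z i) :
    Summable (fun k : ℕ => frobNorm (X (k + 1) - X k) ^ 2) ∧
    Filter.Tendsto (fun k : ℕ => frobNorm (X (k + 1) - X k)) Filter.atTop (nhds 0) ∧
    Filter.Tendsto (fun k : ℕ => frobNorm (Y k - X k)) Filter.atTop (nhds 0) ∧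
    Filter.Tendsto (fun k : ℕ => frobNorm (Y k - X (k + 1))) Filter.atTop (nhds 0) := by
  have hβ0 : 0 < β := lt_of_le_of_lt hLf hβ
  have h3Lβ : 0 < 3 * Lf + β := by linarith
  have hsval : ∀ (Z : Matrix (Fin m) (Fin n) ℝ) i, 0 ≤ sval Z i := fun Z i => Real.sqrt_nonneg _
  set d : ℕ → ℝ := fun k => frobNorm (X (k + 1) - X k) ^ 2 with hd_def
  set qq : ℕ → ℝ := fun k => frobNorm (X k - X (k - 1)) ^ 2 with hqq_def
  set F : ℕ → ℝ := fun k => f (X k) + lam * ∑ i, (sval (X k) i + ε k i) ^ p with hF_def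
  set δ : ℝ := (3 * Lf + β) / 2 * alphabar ^ 2 with hδ_def
  set c : ℝ := β / 2 - δ with hc_def
  set E : ℕ → ℝ := fun k => F k + δ * qq k with hE_def
  have hq0 : ∀ k, 0 ≤ qq k := fun k => sq_nonneg _
  have hd0 : ∀ k, 0 ≤ d k := fun k => sq_nonneg _
  have hδ0 : 0 ≤ δ := mul_nonneg (by linarith) (sq_nonneg _)
  have hc0 : 0 < c := by
    have h1 : alphabar ^ 2 < (Real.sqrt (β / (3 * Lf + β))) ^ 2 :=
      pow_lt_pow_left₀ hab1 hab0.le (by norm_num)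
    have h2 : (Real.sqrt (β / (3 * Lf + β))) ^ 2 = β / (3 * Lf + β) :=
      Real.sq_sqrt (div_nonneg hβ0.le h3Lβ.le)
    have h3 : (3 * Lf + β) / 2 * alphabar ^ 2 < (3 * Lf + β) / 2 * (β / (3 * Lf + β)) :=
      mul_lt_mul_of_pos_left (by rw [h2] at h1; exact h1) (by linarith)
    have h4 : (3 * Lf + β) / 2 * (β / (3 * Lf + β)) = β / 2 := by
      field_simp
    rw [hc_def, hδ_def]
    linarith
  -- key per-step inequality
  have hkey : ∀ k, E (k + 1) + c * d k ≤ E k := by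
    intro k
    have hA := hmin k (X k)
    rw [sub_self, FrobAux.frob_zero] at hA
    have hB := FrobAux.descent_upper hgrad hlip (X (k + 1)) (Y k)
    have hC := FrobAux.descent_lower hgrad hlip (X k) (Y k)
    have hg1 : finner (Gf (Y k)) (X (k + 1) - Y k)
        = finner (X (k + 1)) (Gf (Y k)) - finner (Y k) (Gf (Y k)) := by
      rw [FrobAux.finner_comm, FrobAux.finner_sub_left]
    have hg2 : finner (Gf (Y k)) (X k - Y k)
        = finner (X k) (Gf (Y k)) - finner (Y k) (Gf (Y k)) := by
      rw [FrobAux.finner_comm, FrobAux.finner_sub_left]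
    rw [hg1] at hB
    rw [hg2] at hC
    have hconc : lam * ∑ i, (sval (X (k + 1)) i + ε (k + 1) i) ^ p
        ≤ lam * ∑ i, (sval (X k) i + ε k i) ^ p
          + (lam * ∑ i, (p * (sval (X k) i + ε k i) ^ (p - 1)) * sval (X (k + 1)) i
             - lam * ∑ i, (p * (sval (X k) i + ε k i) ^ (p - 1)) * sval (X k) i) := by
      have hpt : ∀ i : Fin m, (sval (X (k + 1)) i + ε (k + 1) i) ^ p
          ≤ (sval (X k) i + ε k i) ^ p
            + ((p * (sval (X k) i + ε k i) ^ (p - 1)) * sval (X (k + 1)) i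
               - (p * (sval (X k) i + ε k i) ^ (p - 1)) * sval (X k) i) := by
        intro i
        have ht : 0 < sval (X k) i + ε k i := by
          have h5 := hsval (X k) i; have h6 := hε k i; linarith
        have hs : 0 ≤ sval (X (k + 1)) i + ε (k + 1) i := by
          have h5 := hsval (X (k + 1)) i; have h6 := (hε (k + 1) i).le; linarith
        have htan := FrobAux.rpow_tangent hp0 hp1 hs ht
        have hw : 0 ≤ p * (sval (X k) i + ε k i) ^ (p - 1) :=
          mul_nonneg hp0.le (Real.rpow_nonneg ht.le _)
        have hwe : p * (sval (X k) i + ε k i) ^ (p - 1) * (ε (k + 1) i - ε k i) ≤ 0 :=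
          mul_nonpos_of_nonneg_of_nonpos hw (by have := hεmono k i; linarith)
        nlinarith [htan, hwe]
      have hsum := Finset.sum_le_sum (s := Finset.univ) (fun i _ => hpt i)
      have h7 := mul_le_mul_of_nonneg_left hsum hlam.le
      calc lam * ∑ i, (sval (X (k + 1)) i + ε (k + 1) i) ^ p ≤ _ := h7
        _ = _ := by
          rw [Finset.sum_add_distrib, Finset.sum_sub_distrib]
          ring
    have hYX : frobNorm (X k - Y k) = α k * frobNorm (X k - X (k - 1)) := by
      have h7 : X k - Y k = -(α k • (X k - X (k - 1))) := by rw [hY k]; abel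
      rw [h7, FrobAux.frob_neg, FrobAux.frob_smul, abs_of_nonneg (hα k).1]
    have hv : frobNorm (X k - Y k) ^ 2 ≤ alphabar ^ 2 * frobNorm (X k - X (k - 1)) ^ 2 := by
      rw [hYX]
      have h8 : 0 ≤ frobNorm (X k - X (k - 1)) := FrobAux.frob_nonneg _
      have h9 := (hα k).1
      have h10 := (hα k).2
      have h11 : α k ^ 2 ≤ alphabar ^ 2 := pow_le_pow_left₀ h9 h10 2
      calc (α k * frobNorm (X k - X (k - 1))) ^ 2
          = α k ^ 2 * frobNorm (X k - X (k - 1)) ^ 2 := by ring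
        _ ≤ alphabar ^ 2 * frobNorm (X k - X (k - 1)) ^ 2 :=
            mul_le_mul_of_nonneg_right h11 (sq_nonneg _)
    have hv2 : (3 * Lf + β) / 2 * frobNorm (X k - Y k) ^ 2
        ≤ (3 * Lf + β) / 2 * (alphabar ^ 2 * frobNorm (X k - X (k - 1)) ^ 2) :=
      mul_le_mul_of_nonneg_left hv (by linarith)
    have huβ : Lf / 2 * frobNorm (X (k + 1) - Y k) ^ 2
        ≤ β / 2 * frobNorm (X (k + 1) - Y k) ^ 2 :=
      mul_le_mul_of_nonneg_right (by linarith) (sq_nonneg _)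
    simp only [hE_def, hF_def, hd_def, hqq_def, hc_def, hδ_def, Nat.add_sub_cancel]
    exact FrobAux.key_arith hA hB hC hconc hv2 huβ
  have hEmono : ∀ k, E (k + 1) ≤ E k := by
    intro k
    have h1 := hkey k
    have h2 : 0 ≤ c * d k := mul_nonneg hc0.le (hd0 k)
    linarith
  have hEle0 : ∀ k, E k ≤ E 0 := by
    intro k
    induction k with
    | zero => exact le_refl _
    | succ k ih => exact (hEmono k).trans ih
  have hF0leF : ∀ k, f (X k) + lam * ∑ i, sval (X k) i ^ p ≤ F k := by
    intro k
    have h1 : ∀ i : Fin m, sval (X k) i ^ p ≤ (sval (X k) i + ε k i) ^ p := fun i =>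
      Real.rpow_le_rpow (hsval _ i) (le_add_of_nonneg_right (hε k i).le) hp0.le
    have h2 := Finset.sum_le_sum (fun i (_ : i ∈ Finset.univ) => h1 i)
    have h3 := mul_le_mul_of_nonneg_left h2 hlam.le
    simp only [hF_def]
    linarith
  have hFleE : ∀ k, F k ≤ E k := by
    intro k
    have h1 : 0 ≤ δ * qq k := mul_nonneg hδ0 (hq0 k)
    simp only [hE_def]
    linarith
  obtain ⟨R, hR⟩ := hlevel (E 0)
  have hXR : ∀ k, frobNorm (X k) ≤ R := by
    intro k
    apply hR
    have h1 := hF0leF k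
    have h2 := hFleE k
    have h3 := hEle0 k
    linarith
  have hlowf : ∀ k, f 0 - frobNorm (Gf 0) * R - 3 * Lf / 2 * R ^ 2 ≤ f (X k) := by
    intro k
    have h1 := FrobAux.descent_lower hgrad hlip (X k) 0
    rw [sub_zero] at h1
    have h2 : -(frobNorm (Gf 0) * frobNorm (X k)) ≤ finner (Gf 0) (X k) :=
      FrobAux.neg_finner_le _ _
    have h3 : frobNorm (Gf 0) * frobNorm (X k) ≤ frobNorm (Gf 0) * R :=
      mul_le_mul_of_nonneg_left (hXR k) (FrobAux.frob_nonneg _)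
    have h4 : frobNorm (X k) ^ 2 ≤ R ^ 2 :=
      pow_le_pow_left₀ (FrobAux.frob_nonneg _) (hXR k) 2
    have h5 : 3 * Lf / 2 * frobNorm (X k) ^ 2 ≤ 3 * Lf / 2 * R ^ 2 :=
      mul_le_mul_of_nonneg_left h4 (by linarith)
    linarith
  set B0 : ℝ := f 0 - frobNorm (Gf 0) * R - 3 * Lf / 2 * R ^ 2 with hB0_def
  have hElow : ∀ k, B0 ≤ E k := by
    intro k
    have h1 : (0 : ℝ) ≤ ∑ i, sval (X k) i ^ p :=
      Finset.sum_nonneg fun i _ => Real.rpow_nonneg (hsval _ i) p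
    have h2 := hF0leF k
    have h3 := hFleE k
    have h4 := hlowf k
    have h5 : 0 ≤ lam * ∑ i, sval (X k) i ^ p := mul_nonneg hlam.le h1
    linarith
  have htel : ∀ N, ∑ k ∈ Finset.range N, d k ≤ (E 0 - B0) / c := by
    intro N
    have h9 : ∑ k ∈ Finset.range N, (E k - E (k + 1)) = E 0 - E N :=
      Finset.sum_range_sub' E N
    have h10 : ∑ k ∈ Finset.range N, (c * d k) ≤ ∑ k ∈ Finset.range N, (E k - E (k + 1)) :=
      Finset.sum_le_sum fun k _ => by have := hkey k; linarith
    have h11 := hElow N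
    rw [le_div_iff₀ hc0]
    calc (∑ k ∈ Finset.range N, d k) * c = ∑ k ∈ Finset.range N, (c * d k) := by
          rw [Finset.sum_mul]; exact Finset.sum_congr rfl fun k _ => by ring
      _ ≤ E 0 - E N := by rw [← h9]; exact h10
      _ ≤ E 0 - B0 := by linarith
  have hsummable : Summable d := summable_of_sum_range_le hd0 htel
  have ht1 : Filter.Tendsto (fun k : ℕ => frobNorm (X (k + 1) - X k)) Filter.atTop (nhds 0) := by
    have h1 := (Real.continuous_sqrt.tendsto 0).comp hsummable.tendsto_atTop_zero
    rw [Real.sqrt_zero] at h1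
    refine h1.congr fun k => ?_
    simp only [Function.comp_apply, hd_def]
    exact Real.sqrt_sq (FrobAux.frob_nonneg _)
  have hprev : Filter.Tendsto (fun k : ℕ => frobNorm (X k - X (k - 1))) Filter.atTop (nhds 0) := by
    have h1 := ht1.comp (tendsto_sub_atTop_nat 1)
    refine h1.congr' ?_
    filter_upwards [Filter.eventually_ge_atTop 1] with k hk
    simp only [Function.comp_apply]
    rw [Nat.sub_add_cancel hk]
  have ht2 : Filter.Tendsto (fun k : ℕ => frobNorm (Y k - X k)) Filter.atTop (nhds 0) := by
    have hb : ∀ k : ℕ, frobNorm (Y k - X k) ≤ alphabar * frobNorm (X k - X (k - 1)) := by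
      intro k
      have h1 : Y k - X k = α k • (X k - X (k - 1)) := by rw [hY k]; abel
      rw [h1, FrobAux.frob_smul, abs_of_nonneg (hα k).1]
      exact mul_le_mul_of_nonneg_right (hα k).2 (FrobAux.frob_nonneg _)
    have h2 := hprev.const_mul alphabar
    rw [mul_zero] at h2
    exact squeeze_zero (fun k => FrobAux.frob_nonneg _) hb h2
  have ht3 : Filter.Tendsto (fun k : ℕ => frobNorm (Y k - X (k + 1))) Filter.atTop (nhds 0) := by
    have hb : ∀ k : ℕ, frobNorm (Y k - X (k + 1))
        ≤ frobNorm (Y k - X k) + frobNorm (X (k + 1) - X k) := by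
      intro k
      have h1 : Y k - X (k + 1) = (Y k - X k) + -(X (k + 1) - X k) := by abel
      rw [h1]
      calc frobNorm ((Y k - X k) + -(X (k + 1) - X k))
          ≤ frobNorm (Y k - X k) + frobNorm (-(X (k + 1) - X k)) := FrobAux.frob_triangle _ _
        _ = frobNorm (Y k - X k) + frobNorm (X (k + 1) - X k) := by rw [FrobAux.frob_neg]
    have h2 := ht2.add ht1
    rw [add_zero] at h2
    exact squeeze_zero (fun k => FrobAux.frob_nonneg _) hb h2
  exact ⟨hsummable, ht1, ht2, ht3⟩
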